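/- arXiv:1104.3589 — 2 statements merged into one kernel-verified Lean document; each statement's English description precedes it below -/
import Mathlib

section
/- The Landau velocity field v_c, defined for |c|>1 by v_c^1(x)=2(c|x|^2-2x_1|x|+c x_1^2)/(|x|(c|x|-x_1)^2), v_c^2(x)=2 x_2(c x_1-|x|)/(|x|(c|x|-x_1)^2), v_c^3(x)=2 x_3(c x_1-|x|)/(|x|(c|x|-x_1)^2), is divergence free at every point x in R^3 \ {0}. -/
open MeasureTheory Filter Finset

noncomputable section

abbrev E3 : Type := EuclideanSpace ℝ (Fin 3)

def pd (j : Fin 3) (f : E3 → ℝ) (x : E3) : ℝ := fderiv ℝ f x (EuclideanSpace.single j 1)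

def landauV (c : ℝ) (x : E3) : E3 := WithLp.toLp 2 fun k =>
  if k = 0 then
    2 * (c * ‖x‖ ^ 2 - 2 * x 0 * ‖x‖ + c * x 0 ^ 2) / (‖x‖ * (c * ‖x‖ - x 0) ^ 2)
  else
    2 * x k * (c * x 0 - ‖x‖) / (‖x‖ * (c * ‖x‖ - x 0) ^ 2)

def landauP (c : ℝ) (x : E3) : ℝ := 4 * (c * x 0 - ‖x‖) / (‖x‖ * (c * ‖x‖ - x 0) ^ 2)

def gradSq (W : E3 → E3) (x : E3) : ℝ := ∑ j : Fin 3, ∑ k : Fin 3, (pd j (fun y => W y k) x) ^ 2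


set_option maxHeartbeats 2000000 in
theorem landau_div_free (c : ℝ) (hc : 1 < |c|) (x : E3) (hx : x ≠ 0) :
    ∑ j : Fin 3, pd j (fun y => landauV c y j) x = 0 := by
  have hr : (0:ℝ) < ‖x‖ := norm_pos_iff.mpr hx
  have habs : |x 0| ≤ ‖x‖ := by
    have h1 : (inner ℝ (EuclideanSpace.single (0 : Fin 3) (1:ℝ)) x : ℝ) = x 0 := by
      simp [EuclideanSpace.inner_single_left]
    have h2 := abs_real_inner_le_norm (EuclideanSpace.single (0 : Fin 3) (1:ℝ)) x
    rwa [h1, EuclideanSpace.norm_single, norm_one, one_mul] at h2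
  have hD : c * ‖x‖ - x 0 ≠ 0 := by
    have h3 : |x 0| < |c * ‖x‖| := by
      rw [abs_mul, abs_of_pos hr]
      nlinarith [abs_nonneg (x 0)]
    intro h
    rw [sub_eq_zero] at h
    rw [h] at h3
    exact lt_irrefl _ h3
  have hdenne : ‖x‖ * ((c * ‖x‖ - x 0) * (c * ‖x‖ - x 0)) ≠ 0 :=
    mul_ne_zero hr.ne' (mul_ne_zero hD hD)
  -- derivative of the norm
  have hN : HasFDerivAt (fun y : E3 => ‖y‖) (‖x‖⁻¹ • innerSL ℝ x) x := by
    have h1 : HasFDerivAt (fun y : E3 => ‖y‖^2) ((2:ℕ) • innerSL ℝ x) x :=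
      (hasStrictFDerivAt_norm_sq x).hasFDerivAt
    have h2 := h1.sqrt (by positivity)
    have h3 : (fun y : E3 => Real.sqrt (‖y‖^2)) = fun y => ‖y‖ :=
      funext fun y => Real.sqrt_sq (norm_nonneg y)
    rw [h3] at h2
    refine h2.congr_fderiv ?_
    symm
    rw [Real.sqrt_sq hr.le]
    ext v
    simp only [ContinuousLinearMap.smul_apply, smul_smul, smul_eq_mul, nsmul_eq_mul,
      Nat.cast_ofNat]
    rw [← mul_assoc]
    congr 1
    field_simp
  have hP0 : HasFDerivAt (fun y : E3 => y 0) (EuclideanSpace.proj 0 : E3 →L[ℝ] ℝ) x :=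
    (EuclideanSpace.proj 0 : E3 →L[ℝ] ℝ).hasFDerivAt
  have hP1 : HasFDerivAt (fun y : E3 => y 1) (EuclideanSpace.proj 1 : E3 →L[ℝ] ℝ) x :=
    (EuclideanSpace.proj 1 : E3 →L[ℝ] ℝ).hasFDerivAt
  have hP2 : HasFDerivAt (fun y : E3 => y 2) (EuclideanSpace.proj 2 : E3 →L[ℝ] ℝ) x :=
    (EuclideanSpace.proj 2 : E3 →L[ℝ] ℝ).hasFDerivAt
  have hsub := (hN.const_mul c).sub hP0
  have hdenF := hN.mul (hsub.mul hsub)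
  have hinv := (hasDerivAt_inv hdenne).comp_hasFDerivAt x hdenF
  simp only [Function.comp_def] at hinv
  have hnum0 := ((((hN.mul hN).const_mul c).sub ((hP0.mul hN).const_mul 2)).add
      ((hP0.mul hP0).const_mul c)).const_mul 2
  have hf0 := hnum0.mul hinv
  have hf1 := ((hP1.const_mul 2).mul ((hP0.const_mul c).sub hN)).mul hinv
  have hf2 := ((hP2.const_mul 2).mul ((hP0.const_mul c).sub hN)).mul hinv
  have hf0eq : (fun y : E3 => landauV c y 0) = fun y : E3 =>
      (2 * (c * (‖y‖ * ‖y‖) - 2 * (y 0 * ‖y‖) + c * (y 0 * y 0))) *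
        (‖y‖ * ((c * ‖y‖ - y 0) * (c * ‖y‖ - y 0)))⁻¹ := by
    funext y
    simp only [landauV, PiLp.toLp_apply, eq_self_iff_true, if_true, div_eq_mul_inv]
    ring
  have hf1eq : (fun y : E3 => landauV c y 1) = fun y : E3 =>
      ((2 * y 1) * (c * y 0 - ‖y‖)) * (‖y‖ * ((c * ‖y‖ - y 0) * (c * ‖y‖ - y 0)))⁻¹ := by
    funext y
    simp only [landauV, PiLp.toLp_apply, if_neg (by decide : (1 : Fin 3) ≠ 0), div_eq_mul_inv]
    ring
  have hf2eq : (fun y : E3 => landauV c y 2) = fun y : E3 =>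
      ((2 * y 2) * (c * y 0 - ‖y‖)) * (‖y‖ * ((c * ‖y‖ - y 0) * (c * ‖y‖ - y 0)))⁻¹ := by
    funext y
    simp only [landauV, PiLp.toLp_apply, if_neg (by decide : (2 : Fin 3) ≠ 0), div_eq_mul_inv]
    ring
  rw [Fin.sum_univ_three]
  simp only [pd]
  rw [hf0eq, hf1eq, hf2eq]
  erw [hf0.fderiv, hf1.fderiv, hf2.fderiv]
  simp only [ContinuousLinearMap.add_apply, ContinuousLinearMap.sub_apply,
    ContinuousLinearMap.smul_apply, ContinuousLinearMap.coe_smul', Pi.smul_apply,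
    smul_eq_mul, innerSL_apply_apply, EuclideanSpace.inner_single_right, PiLp.proj_apply,
    EuclideanSpace.single_apply, map_one, conj_trivial]
  norm_num [show ((0:Fin 3) = 2) ↔ False from by decide]
  have hsq : x 2 ^ 2 = ‖x‖^2 - x 0^2 - x 1^2 := by
    have h := EuclideanSpace.norm_eq x
    rw [h]
    rw [Real.sq_sqrt (by positivity)]
    simp [Fin.sum_univ_three, sq_abs]
    ring
  field_simp
  ring_nf
  rw [hsq]
  ring
end
end

section
/- (Weak Young averaging lemma, case α = ∞) Let f ∈ L^1((0,∞)) be nonnegative. Then there exists a constant C > 0, independent of f, such that for all t > 0, (1/t) ∫_0^t (|·|^{-1/2} * f^{3/4})(s) ds ≤ C t^{-1/4} ‖f‖_{L^1}^{3/4}, where (|·|^{-1/2} * g)(s) = ∫_0^s (s-τ)^{-1/2} g(τ) dτ. -/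
open MeasureTheory Set
open scoped ENNReal

lemma kernel_lint (τ t : ℝ) (h : τ ≤ t) :
    ∫⁻ s in Set.Icc τ t, ENNReal.ofReal ((s - τ) ^ (-(1 / 2 : ℝ)))
      = ENNReal.ofReal (2 * (t - τ) ^ ((1 : ℝ) / 2)) := by
  rw [Measure.restrict_congr_set Ioc_ae_eq_Icc.symm]
  have hint : IntervalIntegrable (fun s => (s - τ) ^ (-(1 / 2 : ℝ))) volume τ t := by
    simpa using (intervalIntegral.intervalIntegrable_rpow' (a := 0) (b := t - τ)
      (show (-1:ℝ) < -(1/2) by norm_num)).comp_sub_right τ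
  have hint' : IntegrableOn (fun s => (s - τ) ^ (-(1 / 2 : ℝ))) (Set.Ioc τ t) volume := by
    rwa [intervalIntegrable_iff_integrableOn_Ioc_of_le h] at hint
  rw [← ofReal_integral_eq_lintegral_ofReal hint' ?nn]
  case nn =>
    filter_upwards [ae_restrict_mem measurableSet_Ioc] with s hs
    exact Real.rpow_nonneg (by linarith [hs.1]) _
  congr 1
  rw [← intervalIntegral.integral_of_le h,
    intervalIntegral.integral_comp_sub_right (fun y => y ^ (-(1/2:ℝ))) τ]
  rw [integral_rpow (Or.inl (by norm_num))]
  rw [sub_self, Real.zero_rpow (by norm_num)]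
  norm_num
  rw [div_eq_mul_inv, mul_comm]
  norm_num

lemma main_meas (f : ℝ → ℝ) (hm : Measurable f) (hf : ∀ s, 0 ≤ f s)
    (hfi : IntegrableOn f (Set.Ioi 0)) (t : ℝ) (ht : 0 < t) :
    ∫ s in Set.Ioc (0:ℝ) t, (∫ τ in Set.Ioc (0:ℝ) s, (s - τ) ^ (-(1 / 2 : ℝ)) * (f τ) ^ ((3 : ℝ) / 4))
      ≤ 2 * t ^ ((3:ℝ)/4) * (∫ τ in Set.Ioi (0:ℝ), f τ) ^ ((3:ℝ)/4) := by
  set M : ℝ := ∫ τ in Set.Ioi (0:ℝ), f τ with hMdef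
  have hM0 : 0 ≤ M := setIntegral_nonneg measurableSet_Ioi fun τ _ => hf τ
  set H : ℝ → ℝ → ℝ≥0∞ := fun s τ =>
    if τ ≤ s then ENNReal.ofReal ((s - τ) ^ (-(1 / 2 : ℝ)) * (f τ) ^ ((3 : ℝ) / 4)) else 0
    with hHdef
  have hH : Measurable (Function.uncurry H) := by
    apply Measurable.ite (measurableSet_le measurable_snd measurable_fst)
    · fun_prop
    · exact measurable_const
  set G : ℝ → ℝ≥0∞ := fun s => ∫⁻ τ in Set.Ioc (0:ℝ) t, H s τ with hGdef
  have hG : Measurable G := Measurable.lintegral_prod_right hH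
  -- step 1 : inner integral equals toReal (G s)
  have key1 : ∀ s ∈ Set.Ioc (0:ℝ) t,
      (∫ τ in Set.Ioc (0:ℝ) s, (s - τ) ^ (-(1 / 2 : ℝ)) * (f τ) ^ ((3 : ℝ) / 4))
        = (G s).toReal := by
    intro s hs
    have h1 : (∫ τ in Set.Ioc (0:ℝ) s, (s - τ) ^ (-(1 / 2 : ℝ)) * (f τ) ^ ((3 : ℝ) / 4))
        = (∫⁻ τ in Set.Ioc (0:ℝ) s,
            ENNReal.ofReal ((s - τ) ^ (-(1 / 2 : ℝ)) * (f τ) ^ ((3 : ℝ) / 4))).toReal := by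
      apply integral_eq_lintegral_of_nonneg_ae
      · filter_upwards [ae_restrict_mem measurableSet_Ioc] with τ hτ
        exact mul_nonneg (Real.rpow_nonneg (by linarith [hτ.2]) _) (Real.rpow_nonneg (hf τ) _)
      · exact (by fun_prop : Measurable fun τ => (s - τ) ^ (-(1 / 2 : ℝ)) * (f τ) ^ ((3 : ℝ) / 4)).aestronglyMeasurable
    rw [h1]
    congr 1
    have h2 : ∀ τ : ℝ, H s τ = (Set.Iic s).indicator
        (fun τ => ENNReal.ofReal ((s - τ) ^ (-(1 / 2 : ℝ)) * (f τ) ^ ((3 : ℝ) / 4))) τ := by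
      intro τ; simp [hHdef, Set.indicator_apply, Set.mem_Iic]
    calc ∫⁻ τ in Set.Ioc (0:ℝ) s,
            ENNReal.ofReal ((s - τ) ^ (-(1 / 2 : ℝ)) * (f τ) ^ ((3 : ℝ) / 4))
        = ∫⁻ τ in Set.Iic s ∩ Set.Ioc (0:ℝ) t,
            ENNReal.ofReal ((s - τ) ^ (-(1 / 2 : ℝ)) * (f τ) ^ ((3 : ℝ) / 4)) := by
          have hset : Set.Iic s ∩ Set.Ioc (0:ℝ) t = Set.Ioc (0:ℝ) s := by
            ext x
            simp only [Set.mem_Ioc, Set.mem_inter_iff, Set.mem_Iic]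
            constructor
            · rintro ⟨h1', h2', _⟩; exact ⟨h2', h1'⟩
            · rintro ⟨h1', h2'⟩; exact ⟨h2', h1', h2'.trans hs.2⟩
          rw [hset]
      _ = ∫⁻ τ in Set.Ioc (0:ℝ) t, H s τ := by
          rw [← Measure.restrict_restrict measurableSet_Iic, ← lintegral_indicator measurableSet_Iic]
          exact lintegral_congr fun τ => (h2 τ).symm
  rw [setIntegral_congr_fun measurableSet_Ioc key1]
  -- step 3 : bound the double lintegral
  have holder : ∫⁻ τ in Set.Ioc (0:ℝ) t, ENNReal.ofReal ((f τ) ^ ((3:ℝ)/4))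
      ≤ ENNReal.ofReal M ^ ((3:ℝ)/4) * ENNReal.ofReal t ^ ((1:ℝ)/4) := by
    have h1 : ∀ τ : ℝ, ENNReal.ofReal ((f τ) ^ ((3:ℝ)/4))
        = (ENNReal.ofReal (f τ)) ^ ((3:ℝ)/4) := fun τ =>
      (ENNReal.ofReal_rpow_of_nonneg (hf τ) (by norm_num)).symm
    simp_rw [h1]
    have hconj : Real.HolderConjugate (4/3) 4 := Real.holderConjugate_iff.mpr ⟨by norm_num, by norm_num⟩
    have hmono := ENNReal.lintegral_mul_le_Lp_mul_Lq (volume.restrict (Set.Ioc (0:ℝ) t)) hconj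
      (f := fun τ => (ENNReal.ofReal (f τ)) ^ ((3:ℝ)/4)) (g := fun _ => 1)
      (by fun_prop) aemeasurable_const
    simp only [Pi.mul_apply, mul_one, ENNReal.one_rpow] at hmono
    rw [lintegral_one, Measure.restrict_apply_univ, Real.volume_Ioc, sub_zero] at hmono
    have hrw : ∀ τ : ℝ, ((ENNReal.ofReal (f τ)) ^ ((3:ℝ)/4)) ^ ((4:ℝ)/3)
        = ENNReal.ofReal (f τ) := by
      intro τ
      rw [← ENNReal.rpow_mul]
      norm_num
    simp_rw [hrw] at hmono
    rw [show (1:ℝ)/(4/3) = 3/4 by norm_num] at hmono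
    refine hmono.trans ?_
    have hle : ∫⁻ τ in Set.Ioc (0:ℝ) t, ENNReal.ofReal (f τ)
        ≤ ∫⁻ τ in Set.Ioi (0:ℝ), ENNReal.ofReal (f τ) :=
      lintegral_mono_set Set.Ioc_subset_Ioi_self
    have heq : ∫⁻ τ in Set.Ioi (0:ℝ), ENNReal.ofReal (f τ) = ENNReal.ofReal M := by
      rw [hMdef, ofReal_integral_eq_lintegral_ofReal hfi]
      exact Filter.Eventually.of_forall fun τ => hf τ
    exact mul_le_mul_left (ENNReal.rpow_le_rpow (hle.trans heq.le) (by norm_num)) _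
  have key2 : ∀ τ ∈ Set.Ioc (0:ℝ) t, (∫⁻ s in Set.Ioc (0:ℝ) t, H s τ)
      ≤ ENNReal.ofReal (2 * t ^ ((1:ℝ)/2)) * ENNReal.ofReal ((f τ) ^ ((3:ℝ)/4)) := by
    intro τ hτ
    have h3 : ∀ s : ℝ, H s τ = (Set.Ici τ).indicator
        (fun s => ENNReal.ofReal ((s - τ) ^ (-(1 / 2 : ℝ)))
          * ENNReal.ofReal ((f τ) ^ ((3 : ℝ) / 4))) s := by
      intro s
      simp only [hHdef, Set.indicator_apply, Set.mem_Ici]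
      split_ifs with h
      · rw [ENNReal.ofReal_mul (Real.rpow_nonneg (by linarith) _)]
      · rfl
    calc ∫⁻ s in Set.Ioc (0:ℝ) t, H s τ
        = ∫⁻ s in Set.Ici τ ∩ Set.Ioc (0:ℝ) t,
            ENNReal.ofReal ((s - τ) ^ (-(1 / 2 : ℝ)))
              * ENNReal.ofReal ((f τ) ^ ((3 : ℝ) / 4)) := by
          rw [← Measure.restrict_restrict measurableSet_Ici, ← lintegral_indicator measurableSet_Ici]
          exact lintegral_congr fun s => h3 s
      _ = ∫⁻ s in Set.Icc τ t,
            ENNReal.ofReal ((s - τ) ^ (-(1 / 2 : ℝ)))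
              * ENNReal.ofReal ((f τ) ^ ((3 : ℝ) / 4)) := by
          have hset : Set.Ici τ ∩ Set.Ioc (0:ℝ) t = Set.Icc τ t := by
            ext x
            simp only [Set.mem_inter_iff, Set.mem_Ici, Set.mem_Ioc, Set.mem_Icc]
            constructor
            · rintro ⟨h1', _, h3'⟩; exact ⟨h1', h3'⟩
            · rintro ⟨h1', h2'⟩; exact ⟨h1', lt_of_lt_of_le hτ.1 h1', h2'⟩
          rw [hset]
      _ = (∫⁻ s in Set.Icc τ t, ENNReal.ofReal ((s - τ) ^ (-(1 / 2 : ℝ))))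
            * ENNReal.ofReal ((f τ) ^ ((3 : ℝ) / 4)) :=
          lintegral_mul_const' _ _ ENNReal.ofReal_ne_top
      _ = ENNReal.ofReal (2 * (t - τ) ^ ((1:ℝ)/2)) * ENNReal.ofReal ((f τ) ^ ((3 : ℝ) / 4)) := by
          rw [kernel_lint τ t hτ.2]
      _ ≤ ENNReal.ofReal (2 * t ^ ((1:ℝ)/2)) * ENNReal.ofReal ((f τ) ^ ((3 : ℝ) / 4)) := by
          refine mul_le_mul_left (ENNReal.ofReal_le_ofReal ?_) _
          have h := Real.rpow_le_rpow (sub_nonneg.2 hτ.2)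
            (by linarith [hτ.1] : t - τ ≤ t) (by norm_num : (0:ℝ) ≤ 1/2)
          linarith
  have hL : ∫⁻ s in Set.Ioc (0:ℝ) t, G s
      ≤ ENNReal.ofReal (2 * t ^ ((3:ℝ)/4) * M ^ ((3:ℝ)/4)) := by
    have hswap : ∫⁻ s in Set.Ioc (0:ℝ) t, G s
        = ∫⁻ τ in Set.Ioc (0:ℝ) t, ∫⁻ s in Set.Ioc (0:ℝ) t, H s τ :=
      lintegral_lintegral_swap hH.aemeasurable
    rw [hswap]
    calc ∫⁻ τ in Set.Ioc (0:ℝ) t, ∫⁻ s in Set.Ioc (0:ℝ) t, H s τ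
        ≤ ∫⁻ τ in Set.Ioc (0:ℝ) t,
            ENNReal.ofReal (2 * t ^ ((1:ℝ)/2)) * ENNReal.ofReal ((f τ) ^ ((3:ℝ)/4)) :=
          setLIntegral_mono (measurable_const.mul
            (by fun_prop : Measurable fun τ => ENNReal.ofReal ((f τ) ^ ((3:ℝ)/4)))) key2
      _ = ENNReal.ofReal (2 * t ^ ((1:ℝ)/2))
            * ∫⁻ τ in Set.Ioc (0:ℝ) t, ENNReal.ofReal ((f τ) ^ ((3:ℝ)/4)) :=
          lintegral_const_mul' _ _ ENNReal.ofReal_ne_top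
      _ ≤ ENNReal.ofReal (2 * t ^ ((1:ℝ)/2))
            * (ENNReal.ofReal M ^ ((3:ℝ)/4) * ENNReal.ofReal t ^ ((1:ℝ)/4)) := by
          gcongr
      _ = ENNReal.ofReal (2 * t ^ ((3:ℝ)/4) * M ^ ((3:ℝ)/4)) := by
          rw [ENNReal.ofReal_rpow_of_nonneg hM0 (by norm_num : (0:ℝ) ≤ 3/4),
            ENNReal.ofReal_rpow_of_nonneg ht.le (by norm_num : (0:ℝ) ≤ 1/4),
            ← ENNReal.ofReal_mul (by positivity), ← ENNReal.ofReal_mul (by positivity)]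
          congr 1
          rw [show (3:ℝ)/4 = 1/2 + 1/4 by norm_num, Real.rpow_add ht]
          ring
  have hGfin : ∀ᵐ s ∂(volume.restrict (Set.Ioc (0:ℝ) t)), G s < ⊤ :=
    ae_lt_top hG (hL.trans_lt ENNReal.ofReal_lt_top).ne
  rw [integral_toReal hG.aemeasurable hGfin]
  exact ENNReal.toReal_le_of_le_ofReal (by positivity) hL

theorem weak_young_averaging :
    ∃ C > 0, ∀ f : ℝ → ℝ, (∀ s, 0 ≤ f s) → IntegrableOn f (Set.Ioi 0) →
      ∀ t : ℝ, 0 < t →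
        (1 / t) * ∫ s in (0 : ℝ)..t,
            (∫ τ in (0 : ℝ)..s, (s - τ) ^ (-(1 / 2 : ℝ)) * (f τ) ^ ((3 : ℝ) / 4))
          ≤ C * t ^ (-(1 / 4 : ℝ)) * (∫ τ in Set.Ioi (0 : ℝ), f τ) ^ ((3 : ℝ) / 4) := by
  refine ⟨2, by norm_num, ?_⟩
  intro f hf hfi t ht
  set g : ℝ → ℝ := fun x => max ((hfi.1).mk f x) 0 with hgdef
  have hg_meas : Measurable g :=
    ((hfi.1).stronglyMeasurable_mk.measurable).max measurable_const
  have hfg : f =ᵐ[volume.restrict (Set.Ioi 0)] g := by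
    filter_upwards [(hfi.1).ae_eq_mk] with x hx
    rw [hgdef]
    simp only
    rw [← hx, max_eq_left (hf x)]
  have hg_nonneg : ∀ x, 0 ≤ g x := fun x => le_max_right _ _
  have hgi : IntegrableOn g (Set.Ioi 0) := hfi.congr hfg
  have hMeq : (∫ τ in Set.Ioi (0:ℝ), f τ) = ∫ τ in Set.Ioi (0:ℝ), g τ :=
    integral_congr_ae hfg
  rw [intervalIntegral.integral_of_le ht.le]
  have hout : ∀ s ∈ Set.Ioc (0:ℝ) t,
      (∫ τ in (0:ℝ)..s, (s - τ) ^ (-(1 / 2 : ℝ)) * (f τ) ^ ((3 : ℝ) / 4))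
        = ∫ τ in Set.Ioc (0:ℝ) s, (s - τ) ^ (-(1 / 2 : ℝ)) * (g τ) ^ ((3 : ℝ) / 4) := by
    intro s hs
    rw [intervalIntegral.integral_of_le hs.1.le]
    refine integral_congr_ae ?_
    have h' : f =ᵐ[volume.restrict (Set.Ioc (0:ℝ) s)] g :=
      ae_restrict_of_ae_restrict_of_subset Set.Ioc_subset_Ioi_self hfg
    filter_upwards [h'] with τ hτ
    rw [hτ]
  rw [setIntegral_congr_fun measurableSet_Ioc hout, hMeq]
  have hmain := main_meas g hg_meas hg_nonneg hgi t ht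
  have halg : (1/t) * (2 * t ^ ((3:ℝ)/4) * (∫ τ in Set.Ioi (0:ℝ), g τ) ^ ((3:ℝ)/4))
      = 2 * t ^ (-(1/4:ℝ)) * (∫ τ in Set.Ioi (0:ℝ), g τ) ^ ((3:ℝ)/4) := by
    rw [show (-(1/4:ℝ)) = 3/4 + (-1) by norm_num, Real.rpow_add ht, Real.rpow_neg_one]
    field_simp
  exact le_trans (mul_le_mul_of_nonneg_left hmain (by positivity)) (le_of_eq halg)
end
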